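/- Fix an integer n ≥ 2 and reals b₁ > b₂ ≥ … ≥ bₙ > 0, and let r ∈ ℝⁿ with rᵢ > 0 for all i. Then the set { τ > 0 : sin(bᵢτ/2) ≠ 0 for all i, and ψ(τ, r) = 0 } is nonempty and has a least element τ₁(r), and τ₁(r) > 2π/b₁. -/

import Mathlib

open Real Finset Set Filter Topology

/-- `ψ(τ, r) = Σ_{i=1}^{n} (rᵢ²/2)·(3τ − bᵢτ²·cos(bᵢτ/2)/sin(bᵢτ/2) − sin(bᵢτ)/bᵢ)`. -/
noncomputable def psiSum (n : ℕ) (b r : ℕ → ℝ) (τ : ℝ) : ℝ :=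
  ∑ i ∈ Finset.Icc 1 n, (r i) ^ 2 / 2 *
    (3 * τ - b i * τ ^ 2 * Real.cos (b i * τ / 2) / Real.sin (b i * τ / 2) -
      Real.sin (b i * τ) / b i)


noncomputable def trm (b τ : ℝ) : ℝ :=
  3 * τ - b * τ ^ 2 * Real.cos (b * τ / 2) / Real.sin (b * τ / 2) - Real.sin (b * τ) / b

lemma sin_neg_of_pi_lt {x : ℝ} (h1 : π < x) (h2 : x < 2 * π) : Real.sin x < 0 := by
  have h := Real.sin_pos_of_pos_of_lt_pi (x := x - π) (by linarith) (by linarith)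
  rw [Real.sin_sub_pi] at h
  linarith

lemma key_pos {x : ℝ} (hx : 0 < x) (hx2 : x < 2 * π) :
    0 < 3 * x - x ^ 2 * Real.cos (x / 2) / Real.sin (x / 2) - Real.sin x := by
  have hu0 : 0 < x / 2 := by linarith
  have huπ : x / 2 < π := by linarith
  have hs : 0 < Real.sin (x / 2) := Real.sin_pos_of_pos_of_lt_pi hu0 huπ
  have hsinx : Real.sin x = 2 * Real.sin (x / 2) * Real.cos (x / 2) := by
    rw [← Real.sin_two_mul]; ring_nf
  have hslt : Real.sin (x / 2) < x / 2 := Real.sin_lt hu0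
  set u := x / 2 with hu
  set s := Real.sin u with hsdef
  set c := Real.cos u with hcdef
  have key : 0 < 3 * u * s - s ^ 2 * c - 2 * u ^ 2 * c := by
    rcases le_or_gt c 0 with hc | hc
    · nlinarith [mul_pos hu0 hs, mul_nonneg (neg_nonneg.2 hc) (sq_nonneg s),
        mul_nonneg (neg_nonneg.2 hc) (sq_nonneg u)]
    · have hu2 : u < π / 2 := by
        by_contra h
        push_neg at h
        have := Real.cos_nonpos_of_pi_div_two_le_of_le h (by
          have := Real.pi_pos; linarith)
        rw [← hcdef] at this
        linarith
      have htan : u < Real.tan u := Real.lt_tan hu0 hu2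
      rw [Real.tan_eq_sin_div_cos, lt_div_iff₀ hc] at htan
      nlinarith [mul_pos hu0 hc, mul_pos hs hc, mul_pos hu0 hs]
  have hxu : x = 2 * u := by rw [hu]; ring
  have heq : 3 * x - x ^ 2 * c / s - Real.sin x
      = 2 * (3 * u * s - s ^ 2 * c - 2 * u ^ 2 * c) / s := by
    rw [hsinx, hxu]
    field_simp
    ring
  rw [heq]
  positivity

lemma trm_pos {b τ : ℝ} (hb : 0 < b) (hτ : 0 < τ) (h2 : b * τ < 2 * π) : 0 < trm b τ := by
  have hx : 0 < b * τ := mul_pos hb hτ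
  have h := key_pos hx h2
  have hs : Real.sin (b * τ / 2) ≠ 0 := by
    have : 0 < Real.sin (b * τ / 2) :=
      Real.sin_pos_of_pos_of_lt_pi (by linarith) (by linarith)
    linarith
  have heq : trm b τ
      = (3 * (b * τ) - (b * τ) ^ 2 * Real.cos (b * τ / 2) / Real.sin (b * τ / 2)
          - Real.sin (b * τ)) / b := by
    unfold trm
    field_simp
  rw [heq]
  exact div_pos h hb

lemma continuousAt_trm {b τ : ℝ} (hb : b ≠ 0) (hs : Real.sin (b * τ / 2) ≠ 0) :
    ContinuousAt (trm b) τ := by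
  unfold trm
  apply ContinuousAt.sub
  apply ContinuousAt.sub
  · fun_prop
  · exact ContinuousAt.div (by fun_prop) (by fun_prop) hs
  · exact ContinuousAt.div_const (by fun_prop) b

lemma tendsto_inv_zero_atBot' {f : ℝ → ℝ} {l : Filter ℝ}
    (h0 : Tendsto f l (𝓝 0)) (hneg : ∀ᶠ τ in l, f τ < 0) :
    Tendsto (fun τ => (f τ)⁻¹) l atBot := by
  have h1 : Tendsto (fun τ => -f τ) l (𝓝[>] 0) := by
    rw [tendsto_nhdsWithin_iff]
    refine ⟨by simpa using h0.neg, ?_⟩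
    filter_upwards [hneg] with τ hτ
    simpa using hτ
  have h2 := tendsto_inv_nhdsGT_zero.comp h1
  have h3 := tendsto_neg_atTop_atBot.comp h2
  refine h3.congr fun τ => ?_
  simp [Function.comp, inv_neg]

lemma tendsto_inv_zero_atTop' {f : ℝ → ℝ} {l : Filter ℝ}
    (h0 : Tendsto f l (𝓝 0)) (hpos : ∀ᶠ τ in l, 0 < f τ) :
    Tendsto (fun τ => (f τ)⁻¹) l atTop := by
  have h1 : Tendsto f l (𝓝[>] 0) := by
    rw [tendsto_nhdsWithin_iff]
    exact ⟨h0, hpos⟩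
  exact tendsto_inv_nhdsGT_zero.comp h1

/-- core: given limits of the pieces, `trm b` tends appropriately. -/
lemma trm_tendsto_of_inv {b q : ℝ} {l : Filter ℝ} (hl : l ≤ 𝓝 q)
    {L : Filter ℝ}
    (hmul : Tendsto (fun τ => b * τ ^ 2 * Real.cos (b * τ / 2) * (Real.sin (b * τ / 2))⁻¹) l L)
    (hb : b ≠ 0) :
    Tendsto (fun τ => trm b τ + b * τ ^ 2 * Real.cos (b * τ / 2) * (Real.sin (b * τ / 2))⁻¹)
      l (𝓝 (3 * q - Real.sin (b * q) / b)) := by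
  have hc : Continuous fun τ => 3 * τ - Real.sin (b * τ) / b := by fun_prop
  refine ((hc.tendsto q).mono_left hl).congr fun τ => ?_
  unfold trm
  rw [div_eq_mul_inv]
  ring

lemma trm_sin_tendsto {b q : ℝ} {l : Filter ℝ} (hl : l ≤ 𝓝 q)
    (h0 : Real.sin (b * q / 2) = 0) :
    Tendsto (fun τ => Real.sin (b * τ / 2)) l (𝓝 0) := by
  have hc : Continuous fun τ => Real.sin (b * τ / 2) := by fun_prop
  simpa [h0] using (hc.tendsto q).mono_left hl

lemma trm_cos_tendsto {b q : ℝ} {l : Filter ℝ} (hl : l ≤ 𝓝 q) :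
    Tendsto (fun τ => b * τ ^ 2 * Real.cos (b * τ / 2)) l (𝓝 (b * q ^ 2 * Real.cos (b * q / 2))) := by
  have hc : Continuous fun τ => b * τ ^ 2 * Real.cos (b * τ / 2) := by fun_prop
  exact (hc.tendsto q).mono_left hl

/-- singular from above at `b*q/2 = π`: `trm b → -∞`. -/
lemma trm_atBot {b q : ℝ} (hb : 0 < b) (hq : b * q / 2 = π) :
    Tendsto (trm b) (𝓝[>] q) atBot := by
  have hπ := Real.pi_pos
  have hq0 : 0 < q := by nlinarith
  have hev : ∀ᶠ τ in 𝓝[>] q, Real.sin (b * τ / 2) < 0 := by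
    filter_upwards [Ioo_mem_nhdsGT (show q < 2 * q by linarith)] with τ hτ
    refine sin_neg_of_pi_lt ?_ ?_
    · nlinarith [mul_pos hb (sub_pos.2 hτ.1)]
    · nlinarith [mul_pos hb (sub_pos.2 hτ.2)]
  have hs0 : Real.sin (b * q / 2) = 0 := by rw [hq, Real.sin_pi]
  have hinv := tendsto_inv_zero_atBot' (trm_sin_tendsto nhdsWithin_le_nhds hs0) hev
  have hC : b * q ^ 2 * Real.cos (b * q / 2) < 0 := by
    rw [hq, Real.cos_pi]
    nlinarith
  have hdiv := Filter.Tendsto.neg_mul_atBot hC (trm_cos_tendsto nhdsWithin_le_nhds) hinv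
  have hplus := trm_tendsto_of_inv (b := b) (q := q) nhdsWithin_le_nhds hdiv (ne_of_gt hb)
  have := hplus.add_atBot (tendsto_neg_atTop_atBot.comp hdiv)
  refine this.congr fun τ => ?_
  simp [Function.comp]

/-- singular from below at `b*q/2 = π`: `trm b → +∞`. -/
lemma trm_atTop_pi {b q : ℝ} (hb : 0 < b) (hq : b * q / 2 = π) :
    Tendsto (trm b) (𝓝[<] q) atTop := by
  have hπ := Real.pi_pos
  have hq0 : 0 < q := by nlinarith
  have hev : ∀ᶠ τ in 𝓝[<] q, 0 < Real.sin (b * τ / 2) := by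
    filter_upwards [Ioo_mem_nhdsLT (show q / 2 < q by linarith)] with τ hτ
    refine Real.sin_pos_of_pos_of_lt_pi ?_ ?_
    · nlinarith [mul_pos hb (sub_pos.2 hτ.1)]
    · nlinarith [mul_pos hb (sub_pos.2 hτ.2)]
  have hs0 : Real.sin (b * q / 2) = 0 := by rw [hq, Real.sin_pi]
  have hinv := tendsto_inv_zero_atTop' (trm_sin_tendsto nhdsWithin_le_nhds hs0) hev
  have hC : b * q ^ 2 * Real.cos (b * q / 2) < 0 := by
    rw [hq, Real.cos_pi]
    nlinarith
  have hdiv := Filter.Tendsto.neg_mul_atTop hC (trm_cos_tendsto nhdsWithin_le_nhds) hinv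
  have hplus := trm_tendsto_of_inv (b := b) (q := q) nhdsWithin_le_nhds hdiv (ne_of_gt hb)
  have := hplus.add_atTop (tendsto_neg_atBot_atTop.comp hdiv)
  refine this.congr fun τ => ?_
  simp [Function.comp]

/-- singular from below at `b*q/2 = 2π`: `trm b → +∞`. -/
lemma trm_atTop_two_pi {b q : ℝ} (hb : 0 < b) (hq : b * q / 2 = 2 * π) :
    Tendsto (trm b) (𝓝[<] q) atTop := by
  have hπ := Real.pi_pos
  have hq0 : 0 < q := by nlinarith
  have hev : ∀ᶠ τ in 𝓝[<] q, Real.sin (b * τ / 2) < 0 := by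
    filter_upwards [Ioo_mem_nhdsLT (show q / 2 < q by linarith)] with τ hτ
    refine sin_neg_of_pi_lt ?_ ?_
    · nlinarith [mul_pos hb (sub_pos.2 hτ.1)]
    · nlinarith [mul_pos hb (sub_pos.2 hτ.2)]
  have hs0 : Real.sin (b * q / 2) = 0 := by rw [hq, Real.sin_two_pi]
  have hinv := tendsto_inv_zero_atBot' (trm_sin_tendsto nhdsWithin_le_nhds hs0) hev
  have hC : 0 < b * q ^ 2 * Real.cos (b * q / 2) := by
    rw [hq, Real.cos_two_pi]
    nlinarith
  have hdiv := Filter.Tendsto.pos_mul_atBot hC (trm_cos_tendsto nhdsWithin_le_nhds) hinv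
  have hplus := trm_tendsto_of_inv (b := b) (q := q) nhdsWithin_le_nhds hdiv (ne_of_gt hb)
  have := hplus.add_atTop (tendsto_neg_atBot_atTop.comp hdiv)
  refine this.congr fun τ => ?_
  simp [Function.comp]


lemma finset_sum_tendsto_atTop {ι : Type*} [DecidableEq ι] (s : Finset ι) (f : ι → ℝ → ℝ)
    (l : Filter ℝ)
    (h : ∀ i ∈ s, Tendsto (f i) l atTop ∨ ∃ L, Tendsto (f i) l (𝓝 L))
    {i₀ : ι} (hi₀ : i₀ ∈ s) (htop : Tendsto (f i₀) l atTop) :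
    Tendsto (fun τ => ∑ i ∈ s, f i τ) l atTop := by
  have key : ∀ i ∈ s.erase i₀, ∃ ci : ℝ, ∀ᶠ τ in l, ci ≤ f i τ := by
    intro i hi
    rcases h i (Finset.mem_of_mem_erase hi) with ht | ⟨L, hL⟩
    · exact ⟨0, ht.eventually_ge_atTop 0⟩
    · exact ⟨L - 1, hL.eventually (eventually_ge_nhds (by linarith))⟩
  choose! c hc using key
  have hev : ∀ᶠ τ in l, ∀ i ∈ s.erase i₀, c i ≤ f i τ := (eventually_all_finset _).2 hc
  refine tendsto_atTop_mono' l ?_ (tendsto_atTop_add_const_right l (∑ i ∈ s.erase i₀, c i) htop)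
  filter_upwards [hev] with τ hτ
  rw [← Finset.add_sum_erase s _ hi₀]
  exact add_le_add le_rfl (Finset.sum_le_sum hτ)

lemma finset_sum_tendsto_atBot {ι : Type*} [DecidableEq ι] (s : Finset ι) (f : ι → ℝ → ℝ)
    (l : Filter ℝ) {i₀ : ι} (hi₀ : i₀ ∈ s)
    (h : ∀ i ∈ s.erase i₀, ∃ L, Tendsto (f i) l (𝓝 L))
    (hbot : Tendsto (f i₀) l atBot) :
    Tendsto (fun τ => ∑ i ∈ s, f i τ) l atBot := by
  have key : ∀ i ∈ s.erase i₀, ∃ ci : ℝ, ∀ᶠ τ in l, f i τ ≤ ci := by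
    intro i hi
    obtain ⟨L, hL⟩ := h i hi
    exact ⟨L + 1, hL.eventually (eventually_le_nhds (by linarith))⟩
  choose! c hc using key
  have hev : ∀ᶠ τ in l, ∀ i ∈ s.erase i₀, f i τ ≤ c i := (eventually_all_finset _).2 hc
  refine tendsto_atBot_mono' l ?_ (tendsto_atBot_add_const_right l (∑ i ∈ s.erase i₀, c i) hbot)
  filter_upwards [hev] with τ hτ
  rw [← Finset.add_sum_erase s _ hi₀]
  exact add_le_add le_rfl (Finset.sum_le_sum hτ)

/-- Fix `n ≥ 2` and reals `b₁ > b₂ ≥ … ≥ bₙ > 0`, and `r ∈ ℝⁿ` with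
`rᵢ > 0` for all `i`. Then the set
`{τ > 0 : sin(bᵢτ/2) ≠ 0 for all i, and ψ(τ, r) = 0}` is nonempty, has a least
element `τ₁(r)`, and `τ₁(r) > 2π/b₁`. -/
theorem statement9 (n : ℕ) (hn : 2 ≤ n) (b : ℕ → ℝ)
    (hpos : ∀ i ∈ Finset.Icc 1 n, 0 < b i)
    (h12 : b 2 < b 1)
    (hanti : ∀ i j, 2 ≤ i → i ≤ j → j ≤ n → b j ≤ b i)
    (r : ℕ → ℝ) (hr : ∀ i ∈ Finset.Icc 1 n, 0 < r i) :
    ∃ τ₁ : ℝ,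
      IsLeast {τ : ℝ | 0 < τ ∧ (∀ i ∈ Finset.Icc 1 n, Real.sin (b i * τ / 2) ≠ 0) ∧
        psiSum n b r τ = 0} τ₁ ∧
      2 * Real.pi / b 1 < τ₁ := by
  have hπ := Real.pi_pos
  have h1mem : 1 ∈ Finset.Icc 1 n := by simp [Finset.mem_Icc]; omega
  have h2mem : 2 ∈ Finset.Icc 1 n := by simp [Finset.mem_Icc]; omega
  have hb1 : 0 < b 1 := hpos 1 h1mem
  have hb2 : 0 < b 2 := hpos 2 h2mem
  have hble2 : ∀ i ∈ Finset.Icc 1 n, i ≠ 1 → b i ≤ b 2 := by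
    intro i hi hne
    rw [Finset.mem_Icc] at hi
    exact hanti 2 i (by omega) (by omega) hi.2
  have hble1 : ∀ i ∈ Finset.Icc 1 n, b i ≤ b 1 := by
    intro i hi
    by_cases h : i = 1
    · subst h; exact le_rfl
    · exact le_of_lt (lt_of_le_of_lt (hble2 i hi h) h12)
  set p : ℝ := 2 * Real.pi / b 1 with hpdef
  set q : ℝ := min (4 * Real.pi / b 1) (2 * Real.pi / b 2) with hqdef
  have hp0 : 0 < p := by positivity
  have hq1 : q ≤ 4 * Real.pi / b 1 := min_le_left _ _
  have hq2 : q ≤ 2 * Real.pi / b 2 := min_le_right _ _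
  have hpq : p < q := by
    apply lt_min
    · exact (div_lt_div_iff_of_pos_right hb1).2 (by linarith)
    · exact div_lt_div_of_pos_left (by linarith) hb2 h12
  -- the function as sum of trm's
  set F : ℕ → ℝ → ℝ := fun i τ => r i ^ 2 / 2 * trm (b i) τ with hFdef
  have hFeq : psiSum n b r = fun τ => ∑ i ∈ Finset.Icc 1 n, F i τ := rfl
  have hrF : ∀ i ∈ Finset.Icc 1 n, 0 < r i ^ 2 / 2 := by
    intro i hi
    have := hr i hi
    positivity
  -- b1 * p / 2 = π
  have hb1p : b 1 * p / 2 = π := by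
    rw [hpdef]; field_simp
  -- bounds on Ioo p q
  have hbnd1 : ∀ τ ∈ Ioo p q, π < b 1 * τ / 2 ∧ b 1 * τ / 2 < 2 * π := by
    intro τ hτ
    constructor
    · have := (div_lt_iff₀ hb1).1 hτ.1
      linarith
    · have := (lt_div_iff₀ hb1).1 (lt_of_lt_of_le hτ.2 hq1)
      linarith
  have hbnd2 : ∀ τ ∈ Ioo p q, ∀ i ∈ Finset.Icc 1 n, i ≠ 1 →
      0 < b i * τ / 2 ∧ b i * τ / 2 < π := by
    intro τ hτ i hi hne
    have hτ0 : 0 < τ := lt_trans hp0 hτ.1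
    have hbi : 0 < b i := hpos i hi
    constructor
    · positivity
    · have h2 : b 2 * τ < 2 * π := (lt_div_iff₀' hb2).1 (lt_of_lt_of_le hτ.2 hq2)
      have : b i * τ ≤ b 2 * τ := mul_le_mul_of_nonneg_right (hble2 i hi hne) hτ0.le
      linarith
  have hsin_ne : ∀ τ ∈ Ioo p q, ∀ i ∈ Finset.Icc 1 n, Real.sin (b i * τ / 2) ≠ 0 := by
    intro τ hτ i hi
    by_cases h : i = 1
    · subst h
      exact ne_of_lt (sin_neg_of_pi_lt (hbnd1 τ hτ).1 (hbnd1 τ hτ).2)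
    · obtain ⟨ha, hb'⟩ := hbnd2 τ hτ i hi h
      exact ne_of_gt (Real.sin_pos_of_pos_of_lt_pi ha hb')
  -- continuity on Ioo p q
  have hcontψ : ∀ τ ∈ Ioo p q, ContinuousAt (psiSum n b r) τ := by
    intro τ hτ
    rw [hFeq]
    apply tendsto_finset_sum
    intro i hi
    exact (continuousAt_const.mul
      (continuousAt_trm (hpos i hi).ne' (hsin_ne τ hτ i hi)))
  -- tendsto atBot at p⁺
  have hψbot : Tendsto (psiSum n b r) (𝓝[>] p) atBot := by
    rw [hFeq]
    apply finset_sum_tendsto_atBot _ F _ h1mem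
    · intro i hi
      have hi' := Finset.mem_of_mem_erase hi
      have hne : i ≠ 1 := Finset.ne_of_mem_erase hi
      have hbi : 0 < b i := hpos i hi'
      have hsne : Real.sin (b i * p / 2) ≠ 0 := by
        apply ne_of_gt
        apply Real.sin_pos_of_pos_of_lt_pi
        · positivity
        · have h2 : b i < b 1 := lt_of_le_of_lt (hble2 i hi' hne) h12
          rw [hpdef]
          have hlt : b i / b 1 < 1 := (div_lt_one hb1).2 h2
          have heq : b i * (2 * π / b 1) / 2 = π * (b i / b 1) := by ring
          rw [heq]
          nlinarith [div_pos hbi hb1]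
      exact ⟨F i p,
        (continuousAt_const.mul (continuousAt_trm hbi.ne' hsne)).tendsto.mono_left
          nhdsWithin_le_nhds⟩
    · exact (trm_atBot hb1 hb1p).const_mul_atBot (hrF 1 h1mem)
  -- tendsto atTop at q⁻
  have hsing : ∀ i ∈ Finset.Icc 1 n, Real.sin (b i * q / 2) = 0 →
      Tendsto (trm (b i)) (𝓝[<] q) atTop := by
    intro i hi h0
    have hbi : 0 < b i := hpos i hi
    have hq0 : 0 < q := lt_trans hp0 hpq
    have hx0 : 0 < b i * q / 2 := by positivity
    have hx2 : b i * q / 2 ≤ 2 * π := by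
      have h1 : b i * q ≤ b 1 * q := mul_le_mul_of_nonneg_right (hble1 i hi) hq0.le
      have h2 : b 1 * q ≤ 4 * π := (le_div_iff₀' hb1).1 hq1
      linarith
    rw [Real.sin_eq_zero_iff] at h0
    obtain ⟨k, hk⟩ := h0
    have hk0 : (0 : ℝ) < k := by nlinarith
    have hk2 : (k : ℝ) ≤ 2 := by nlinarith
    have hk0' : (0 : ℤ) < k := by exact_mod_cast hk0
    have hk2' : (k : ℤ) ≤ 2 := by exact_mod_cast hk2
    interval_cases k
    · exact trm_atTop_pi hbi (by rw [← hk]; push_cast; ring)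
    · exact trm_atTop_two_pi hbi (by rw [← hk]; push_cast; ring)
  have hψtop : Tendsto (psiSum n b r) (𝓝[<] q) atTop := by
    rw [hFeq]
    have hdich : ∀ i ∈ Finset.Icc 1 n,
        Tendsto (F i) (𝓝[<] q) atTop ∨ ∃ L, Tendsto (F i) (𝓝[<] q) (𝓝 L) := by
      intro i hi
      by_cases h0 : Real.sin (b i * q / 2) = 0
      · exact Or.inl ((hsing i hi h0).const_mul_atTop (hrF i hi))
      · exact Or.inr ⟨F i q,
          (continuousAt_const.mul (continuousAt_trm (hpos i hi).ne' h0)).tendsto.mono_left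
            nhdsWithin_le_nhds⟩
    obtain ⟨i₀, hi₀, h0⟩ : ∃ i₀ ∈ Finset.Icc 1 n, Real.sin (b i₀ * q / 2) = 0 := by
      rcases le_total (4 * Real.pi / b 1) (2 * Real.pi / b 2) with h | h
      · refine ⟨1, h1mem, ?_⟩
        rw [hqdef, min_eq_left h]
        have : b 1 * (4 * Real.pi / b 1) / 2 = 2 * π := by field_simp; ring
        rw [this, Real.sin_two_pi]
      · refine ⟨2, h2mem, ?_⟩
        rw [hqdef, min_eq_right h]
        have : b 2 * (2 * Real.pi / b 2) / 2 = π := by field_simp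
        rw [this, Real.sin_pi]
    exact finset_sum_tendsto_atTop _ F _ hdich hi₀
      ((hsing i₀ hi₀ h0).const_mul_atTop (hrF i₀ hi₀))
  -- find u' with ψ < 0 on Ioc p u'
  have hψneg : {τ : ℝ | psiSum n b r τ < 0} ∈ 𝓝[>] p := hψbot.eventually_lt_atBot 0
  obtain ⟨u, hu, husub⟩ := mem_nhdsGT_iff_exists_Ioc_subset.1 hψneg
  rw [Set.mem_Ioi] at hu
  set u' : ℝ := min u ((p + q) / 2) with hu'def
  have hpu' : p < u' := lt_min hu (by linarith)
  have hu'q : u' < q := lt_of_le_of_lt (min_le_right _ _) (by linarith)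
  have hψu' : psiSum n b r u' < 0 := husub ⟨hpu', min_le_left _ _⟩
  -- find v with ψ v > 0
  have hψpos : ∀ᶠ τ in 𝓝[<] q, 0 < psiSum n b r τ := hψtop.eventually_gt_atTop 0
  have hIoo : ∀ᶠ τ in 𝓝[<] q, τ ∈ Ioo u' q := Ioo_mem_nhdsLT hu'q
  obtain ⟨v, hv0, hvIoo⟩ := (hψpos.and hIoo).exists
  have hu'v : u' ≤ v := hvIoo.1.le
  have hsubIcc : Icc u' v ⊆ Ioo p q := fun t ht =>
    ⟨lt_of_lt_of_le hpu' ht.1, lt_of_le_of_lt ht.2 hvIoo.2⟩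
  have hcontOn : ContinuousOn (psiSum n b r) (Icc u' v) := fun t ht =>
    (hcontψ t (hsubIcc ht)).continuousWithinAt
  obtain ⟨t0, ht0, ht0ψ⟩ := intermediate_value_Icc hu'v hcontOn ⟨hψu'.le, hv0.le⟩
  set T : Set ℝ := Icc u' v ∩ psiSum n b r ⁻¹' {0} with hTdef
  have hTne : T.Nonempty := ⟨t0, ht0, by simpa using ht0ψ⟩
  have hTclosed : IsClosed T :=
    hcontOn.preimage_isClosed_of_isClosed isClosed_Icc isClosed_singleton
  have hTcpt : IsCompact T := isCompact_Icc.of_isClosed_subset hTclosed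
    Set.inter_subset_left
  have hτ₁T : sInf T ∈ T := hTcpt.sInf_mem hTne
  have hτ₁Ioo : sInf T ∈ Ioo p q := hsubIcc hτ₁T.1
  refine ⟨sInf T, ⟨⟨lt_trans hp0 hτ₁Ioo.1, hsin_ne _ hτ₁Ioo, by simpa using hτ₁T.2⟩, ?_⟩,
    hτ₁Ioo.1⟩
  -- lower bound
  rintro s ⟨hs0, hssin, hsψ⟩
  by_contra hlt
  push_neg at hlt
  have hsv : s < v := lt_of_lt_of_le hlt hτ₁T.1.2
  rcases lt_trichotomy s p with h | h | h
  · -- ψ s > 0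
    have hpos' : 0 < psiSum n b r s := by
      rw [hFeq]
      apply Finset.sum_pos
      · intro i hi
        apply mul_pos (hrF i hi)
        apply trm_pos (hpos i hi) hs0
        have h1 : b i * s ≤ b 1 * s := mul_le_mul_of_nonneg_right (hble1 i hi) hs0.le
        have h2 : b 1 * s < b 1 * p := mul_lt_mul_of_pos_left h hb1
        have h3 : b 1 * p = 2 * π := by rw [hpdef]; field_simp
        linarith
      · exact ⟨1, h1mem⟩
    exact absurd hsψ (ne_of_gt hpos')
  · exact hssin 1 h1mem (by rw [show b 1 * s / 2 = π by rw [h]; exact hb1p, Real.sin_pi])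
  · rcases le_or_gt s u' with h2 | h2
    · exact absurd hsψ (ne_of_lt (husub ⟨h, le_trans h2 (min_le_left _ _)⟩))
    · have hsT : s ∈ T := ⟨⟨h2.le, hsv.le⟩, by simpa using hsψ⟩
      exact absurd (csInf_le hTcpt.bddBelow hsT) (not_le.2 hlt)
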